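/- arXiv:1701.06904 — 3 statements merged into one kernel-verified Lean document; each statement's English description precedes it below -/
import Mathlib

section
/- Let Y be a real random variable with distribution function F, and define G(u) = E[exp(-u e^{Y})] for u > 0. Assume E[e^{-ξ Y}] < ∞ for Re ξ = δ > 0 and that ∫_ℝ e^{-δ y} F(y) dy converges. Then for ξ with Re ξ = δ, ∫_ℝ e^{-ξ y} F(y) dy = (1/Γ(ξ+1)) ∫_0^∞ u^{ξ-1} G(u) du. -/
open MeasureTheory Set Filter

lemma lap_aux {ξ : ℂ} (hξ : 0 < ξ.re) (a : ℝ) :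
    ∫ y in Ioi a, Complex.exp (-ξ * y) = Complex.exp (-ξ * a) / ξ := by
  have hξ0 : ξ ≠ 0 := fun h => by simp [h] at hξ
  have hderiv : ∀ x ∈ Ici a,
      HasDerivAt (fun y : ℝ => -(Complex.exp (-ξ * y) / ξ)) (Complex.exp (-ξ * x)) x := by
    intro x _
    have h1 : HasDerivAt (fun z : ℂ => -ξ * z) (-ξ) (x : ℂ) := by
      simpa using (hasDerivAt_id (x : ℂ)).const_mul (-ξ)
    have h2 : HasDerivAt (fun y : ℝ => -ξ * (y : ℂ)) (-ξ) x := h1.comp_ofReal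
    have h3 := (h2.cexp.div_const ξ).neg
    convert h3 using 1
    · rfl
    · rfl
    · rw [mul_neg, neg_div, neg_neg, mul_div_assoc, div_self hξ0, mul_one]
  have hnorm : ∀ y : ℝ, ‖Complex.exp (-ξ * y)‖ = Real.exp (-ξ.re * y) := by
    intro y
    rw [Complex.norm_exp]
    congr 1
    simp [Complex.mul_re]
  have hint : IntegrableOn (fun y : ℝ => Complex.exp (-ξ * y)) (Ioi a) := by
    apply Integrable.mono' (exp_neg_integrableOn_Ioi a hξ)
    · exact (Complex.measurable_exp.comp (by fun_prop)).aestronglyMeasurable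
    · filter_upwards with y
      rw [hnorm]
  have htend : Tendsto (fun y : ℝ => -(Complex.exp (-ξ * y) / ξ)) atTop (nhds 0) := by
    rw [tendsto_zero_iff_norm_tendsto_zero]
    have : (fun y : ℝ => ‖-(Complex.exp (-ξ * y) / ξ)‖)
        = fun y : ℝ => Real.exp (-ξ.re * y) / ‖ξ‖ := by
      funext y; rw [norm_neg, norm_div, hnorm]
    rw [this]
    have h2 : Tendsto (fun y : ℝ => ξ.re * y) atTop atTop :=
      tendsto_id.const_mul_atTop hξ
    have h3 : Tendsto (fun y : ℝ => Real.exp (-ξ.re * y)) atTop (nhds 0) :=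
      (Real.tendsto_exp_neg_atTop_nhds_zero.comp h2).congr
        (fun y => by simp [Function.comp, neg_mul])
    simpa using h3.div_const ‖ξ‖
  have := integral_Ioi_of_hasDerivAt_of_tendsto' hderiv hint htend
  rw [this]
  ring

lemma lhs_aux {Ω : Type*} [MeasurableSpace Ω] (μ : Measure Ω) [IsProbabilityMeasure μ]
    (Y : Ω → ℝ) (hY : Measurable Y)
    (δ : ℝ) (hδ : 0 < δ) (ξ : ℂ) (hξ : ξ.re = δ)
    (hF : Integrable (fun y : ℝ =>
      Real.exp (-δ * y) * (μ {ω | Y ω ≤ y}).toReal)) :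
    ∫ y : ℝ, Complex.exp (-ξ * y) * ((μ {ω | Y ω ≤ y}).toReal : ℂ) =
      (∫ ω, Complex.exp (-ξ * Y ω) ∂μ) / ξ := by
  have hre : 0 < ξ.re := by rw [hξ]; exact hδ
  set f : ℝ → Ω → ℂ :=
    fun y ω => Set.indicator {ω' | Y ω' ≤ y} (fun _ => Complex.exp (-ξ * y)) ω with hf
  have hmeas_set : ∀ y : ℝ, MeasurableSet {ω | Y ω ≤ y} := fun y => hY measurableSet_Iic
  have hnorm : ∀ y : ℝ, ‖Complex.exp (-ξ * y)‖ = Real.exp (-δ * y) := by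
    intro y
    rw [Complex.norm_exp]
    congr 1
    simp [Complex.mul_re, hξ]
  have huncurry : Function.uncurry f =
      Set.indicator {p : ℝ × Ω | Y p.2 ≤ p.1} (fun p => Complex.exp (-ξ * p.1)) := by
    funext p
    simp only [Function.uncurry, hf, Set.indicator_apply, Set.mem_setOf_eq]
  have hASM : AEStronglyMeasurable (Function.uncurry f) (MeasureTheory.volume.prod μ) := by
    rw [huncurry]
    refine ((Measurable.indicator ?_ ?_)).aestronglyMeasurable
    · exact Complex.measurable_exp.comp (by fun_prop)
    · exact measurableSet_le (hY.comp measurable_snd) measurable_fst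
  have hInt : Integrable (Function.uncurry f) (MeasureTheory.volume.prod μ) := by
    rw [integrable_prod_iff hASM]
    constructor
    · refine Eventually.of_forall (fun y => ?_)
      exact (integrable_const (Complex.exp (-ξ * y))).indicator (hmeas_set y)
    · have heq : (fun y => ∫ ω, ‖Function.uncurry f (y, ω)‖ ∂μ)
          = fun y => Real.exp (-δ * y) * (μ {ω | Y ω ≤ y}).toReal := by
        funext y
        simp only [Function.uncurry_apply_pair, hf, norm_indicator_eq_indicator_norm]
        rw [integral_indicator_const _ (hmeas_set y), hnorm, smul_eq_mul, mul_comm]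
        rfl
      simpa only [heq] using hF
  have hswap := integral_integral_swap hInt
  have h1 : ∫ y : ℝ, Complex.exp (-ξ * y) * ((μ {ω | Y ω ≤ y}).toReal : ℂ)
      = ∫ y : ℝ, ∫ ω, f y ω ∂μ := by
    congr 1
    funext y
    rw [integral_indicator_const _ (hmeas_set y)]
    simp [mul_comm]
    rfl
  have h2 : ∀ ω, (∫ y : ℝ, f y ω) = Complex.exp (-ξ * Y ω) / ξ := by
    intro ω
    have : (fun y : ℝ => f y ω)
        = Set.indicator (Ici (Y ω)) (fun y : ℝ => Complex.exp (-ξ * y)) := by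
      funext y
      simp only [hf, Set.indicator_apply, Set.mem_setOf_eq, Set.mem_Ici]
    rw [this, integral_indicator measurableSet_Ici, integral_Ici_eq_integral_Ioi,
      lap_aux hre]
  rw [h1, hswap]
  simp_rw [h2]
  rw [integral_div]

lemma rhs_aux {Ω : Type*} [MeasurableSpace Ω] (μ : Measure Ω) [IsProbabilityMeasure μ]
    (Y : Ω → ℝ) (hY : Measurable Y)
    (δ : ℝ) (hδ : 0 < δ) (ξ : ℂ) (hξ : ξ.re = δ)
    (hint : Integrable (fun ω => Real.exp (-δ * Y ω)) μ) :
    ∫ u in Ioi (0:ℝ),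
        (u : ℂ) ^ (ξ - 1) * ((∫ ω, Real.exp (-u * Real.exp (Y ω)) ∂μ : ℝ) : ℂ)
      = (∫ ω, Complex.exp (-ξ * Y ω) ∂μ) * Complex.Gamma ξ := by
  have hre : 0 < ξ.re := by rw [hξ]; exact hδ
  set ν := MeasureTheory.volume.restrict (Ioi (0:ℝ)) with hν
  set g : ℝ → Ω → ℂ := fun u ω =>
    (u : ℂ) ^ (ξ - 1) * Complex.exp (-((Real.exp (Y ω) : ℂ) * (u : ℂ))) with hg
  have hASM : AEStronglyMeasurable (Function.uncurry g) (ν.prod μ) := by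
    apply Measurable.aestronglyMeasurable
    apply Measurable.mul
    · exact (Complex.measurable_ofReal.comp measurable_fst).pow_const _
    · exact Complex.measurable_exp.comp (by fun_prop)
  have hnormg : ∀ ω : Ω, ∀ u ∈ Ioi (0:ℝ),
      ‖g u ω‖ = u ^ (δ - 1) * Real.exp (-(Real.exp (Y ω) * u)) := by
    intro ω u hu
    rw [hg]
    simp only [norm_mul]
    rw [Complex.norm_cpow_eq_rpow_re_of_pos hu, Complex.norm_exp]
    congr 2
    · rw [Complex.sub_re, Complex.one_re, hξ]
    · have h' : (-((Real.exp (Y ω) : ℂ) * (u : ℂ))) = ((-(Real.exp (Y ω) * u) : ℝ) : ℂ) := by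
        push_cast; ring
      rw [h', Complex.ofReal_re]
  have hIG : ∀ b : ℝ, 0 < b →
      IntegrableOn (fun u : ℝ => u ^ (δ - 1) * Real.exp (-(b * u))) (Ioi 0) := by
    intro b hb
    have := integrableOn_rpow_mul_exp_neg_mul_rpow (by linarith : (-1:ℝ) < δ - 1)
      one_pos hb
    refine this.congr_fun (fun u hu => ?_) measurableSet_Ioi
    simp only [Real.rpow_one]
    ring_nf
  have hInt : Integrable (Function.uncurry g) (ν.prod μ) := by
    refine ⟨hASM, ?_⟩
    rw [hasFiniteIntegral_iff_norm]
    have haem : AEMeasurable (fun p : ℝ × Ω => ENNReal.ofReal ‖Function.uncurry g p‖)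
        (ν.prod μ) :=
      ENNReal.measurable_ofReal.comp_aemeasurable hASM.norm.aemeasurable
    rw [lintegral_prod_symm _ haem]
    have hinner : ∀ ω : Ω, (∫⁻ u, ENNReal.ofReal ‖Function.uncurry g (u, ω)‖ ∂ν)
        = ENNReal.ofReal (Real.exp (-δ * Y ω) * Real.Gamma δ) := by
      intro ω
      have hbpos : 0 < Real.exp (Y ω) := Real.exp_pos _
      rw [hν]
      rw [setLIntegral_congr_fun measurableSet_Ioi
        (fun u hu => by
          rw [Function.uncurry_apply_pair, hnormg ω u hu])]
      rw [← ofReal_integral_eq_lintegral_ofReal (hIG _ hbpos)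
        (ae_restrict_of_forall_mem measurableSet_Ioi
          (fun u hu => by have : (0:ℝ) < u := hu; positivity))]
      rw [Real.integral_rpow_mul_exp_neg_mul_Ioi hδ hbpos]
      congr 1
      rw [one_div, ← Real.exp_neg, ← Real.exp_mul]
      congr 1
      ring_nf
    simp_rw [hinner]
    have haem2 : AEMeasurable (fun ω => ENNReal.ofReal (Real.exp (-δ * Y ω))) μ :=
      ((Real.measurable_exp.comp (hY.const_mul (-δ))).ennreal_ofReal).aemeasurable
    calc ∫⁻ ω, ENNReal.ofReal (Real.exp (-δ * Y ω) * Real.Gamma δ) ∂μ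
        = ∫⁻ ω, ENNReal.ofReal (Real.exp (-δ * Y ω)) * ENNReal.ofReal (Real.Gamma δ) ∂μ := by
          simp_rw [ENNReal.ofReal_mul (Real.exp_nonneg _)]
      _ = (∫⁻ ω, ENNReal.ofReal (Real.exp (-δ * Y ω)) ∂μ) * ENNReal.ofReal (Real.Gamma δ) :=
          lintegral_mul_const'' _ haem2
      _ < ⊤ := by
          apply ENNReal.mul_lt_top _ ENNReal.ofReal_lt_top
          have h5 := hint.hasFiniteIntegral
          rw [hasFiniteIntegral_iff_norm] at h5
          simpa [Real.norm_eq_abs, abs_of_pos (Real.exp_pos _)] using h5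
  have hstep1 : ∀ u : ℝ,
      (u : ℂ) ^ (ξ - 1) * ((∫ ω, Real.exp (-u * Real.exp (Y ω)) ∂μ : ℝ) : ℂ)
        = ∫ ω, g u ω ∂μ := by
    intro u
    have h0 : ((∫ ω, Real.exp (-u * Real.exp (Y ω)) ∂μ : ℝ) : ℂ)
        = ∫ ω, ((Real.exp (-u * Real.exp (Y ω)) : ℝ) : ℂ) ∂μ :=
      (integral_ofReal (𝕜 := ℂ)).symm
    rw [h0, ← integral_const_mul]
    congr 1
    funext ω
    rw [hg]
    congr 1
    rw [Complex.ofReal_exp]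
    congr 1
    push_cast
    ring
  calc ∫ u in Ioi (0:ℝ),
        (u : ℂ) ^ (ξ - 1) * ((∫ ω, Real.exp (-u * Real.exp (Y ω)) ∂μ : ℝ) : ℂ)
      = ∫ u, ∫ ω, g u ω ∂μ ∂ν := by
        rw [hν]; exact integral_congr_ae (Eventually.of_forall hstep1)
    _ = ∫ ω, ∫ u, g u ω ∂ν ∂μ := integral_integral_swap hInt
    _ = ∫ ω, Complex.exp (-ξ * Y ω) * Complex.Gamma ξ ∂μ := by
        congr 1
        funext ω
        rw [hν, hg]
        have hbpos : (0:ℝ) < Real.exp (Y ω) := Real.exp_pos _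
        rw [Complex.integral_cpow_mul_exp_neg_mul_Ioi hre hbpos]
        congr 1
        have h1 : (1 / (Real.exp (Y ω) : ℂ)) = ((Real.exp (-Y ω) : ℝ) : ℂ) := by
          rw [Real.exp_neg]
          push_cast
          ring
        rw [h1, Complex.cpow_def_of_ne_zero
          (by simp [Complex.ofReal_ne_zero, Real.exp_ne_zero]),
          ← Complex.ofReal_log (Real.exp_pos _).le, Real.log_exp]
        congr 1
        push_cast
        ring
    _ = (∫ ω, Complex.exp (-ξ * Y ω) ∂μ) * Complex.Gamma ξ := integral_mul_const _ _

/-- For a random variable `Y` with distribution function `F` and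
`G(u) = E[exp(-u e^Y)]` for `u > 0`, if `E[e^{-δ Y}] < ∞` and `∫_ℝ e^{-δ y} F(y) dy`
converges, then for `ξ` with `Re ξ = δ > 0`,
`∫_ℝ e^{-ξ y} F(y) dy = (1/Γ(ξ+1)) ∫_0^∞ u^{ξ-1} G(u) du`. -/
theorem transform_from_generating_function
    {Ω : Type*} [MeasurableSpace Ω] (μ : Measure Ω) [IsProbabilityMeasure μ]
    (Y : Ω → ℝ) (hY : Measurable Y)
    (δ : ℝ) (hδ : 0 < δ) (ξ : ℂ) (hξ : ξ.re = δ)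
    (hint : Integrable (fun ω => Real.exp (-δ * Y ω)) μ)
    (hF : Integrable (fun y : ℝ =>
      Real.exp (-δ * y) * (μ {ω | Y ω ≤ y}).toReal)) :
    ∫ y : ℝ, Complex.exp (-ξ * y) * ((μ {ω | Y ω ≤ y}).toReal : ℂ) =
      (1 / Complex.Gamma (ξ + 1)) *
        ∫ u in Ioi (0:ℝ),
          (u : ℂ) ^ (ξ - 1) * ((∫ ω, Real.exp (-u * Real.exp (Y ω)) ∂μ : ℝ) : ℂ) := by
  have hre : 0 < ξ.re := by rw [hξ]; exact hδ
  have hξ0 : ξ ≠ 0 := fun h => by simp [h] at hre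
  have hΓ : Complex.Gamma ξ ≠ 0 := Complex.Gamma_ne_zero_of_re_pos hre
  rw [lhs_aux μ Y hY δ hδ ξ hξ hF, rhs_aux μ Y hY δ hδ ξ hξ hint,
    Complex.Gamma_add_one ξ hξ0]
  field_simp
end

section
/- Fix α > 0, τ > 0, u > 0 and N ≥ 1. Then lim_{a→α} [ 1/(α-a) - C(a,α) · π u^{α-a}/sin(π(α-a)) ] = (N-1)(Γ'(1+α)/Γ(1+α) - 1/α) - 2γ_E - ατ - log u, where C(a,α) = (α/a · Γ(1+a)/Γ(1+α))^{N-1} · e^{(α²-a²)τ/2}/Γ(1+α-a)². -/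
open Real Filter Set

/-- `1/x - π/sin(πx) → 0` as `x → 0⁺`. -/
private lemma aux_one_div_sub_pi_div_sin :
    Tendsto (fun x : ℝ => 1 / x - Real.pi / Real.sin (Real.pi * x))
      (nhdsWithin 0 (Ioi 0)) (nhds 0) := by
  have hπ := Real.pi_pos
  have hbnd : Tendsto (fun x : ℝ => Real.pi ^ 2 * x / 3) (nhdsWithin 0 (Ioi 0)) (nhds 0) := by
    have : Tendsto (fun x : ℝ => Real.pi ^ 2 * x / 3) (nhds 0) (nhds (Real.pi ^ 2 * 0 / 3)) :=
      ((continuous_const.mul continuous_id).div_const 3).tendsto 0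
    simpa using this.mono_left nhdsWithin_le_nhds
  refine squeeze_zero_norm' ?_ hbnd
  have hmem : Ioo (0 : ℝ) (1 / Real.pi) ∈ nhdsWithin (0 : ℝ) (Ioi 0) :=
    Ioo_mem_nhdsGT_of_mem ⟨le_refl 0, by positivity⟩
  filter_upwards [hmem] with x hx
  obtain ⟨hx0, hx1⟩ := hx
  have ht0 : 0 < Real.pi * x := by positivity
  have ht1 : Real.pi * x ≤ 1 := by
    have h := (lt_div_iff₀ hπ).mp hx1
    linarith [mul_comm Real.pi x]
  have hsin_lt : Real.sin (Real.pi * x) < Real.pi * x := Real.sin_lt ht0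
  have hsin_gt : Real.pi * x - (Real.pi * x) ^ 3 / 4 < Real.sin (Real.pi * x) :=
    by have := Real.sin_gt_sub_cube ht0; linarith [pow_pos ht0 3]
  have hcube : (Real.pi * x) ^ 3 / 4 ≤ (Real.pi * x) / 4 := by
    have h3 : (Real.pi * x) ^ 3 ≤ (Real.pi * x) := by
      nlinarith [sq_nonneg (Real.pi * x), sq_nonneg (1 - Real.pi * x), mul_pos ht0 ht0]
    linarith
  have hsin_pos : 0 < Real.sin (Real.pi * x) := by nlinarith
  have hxne : x ≠ 0 := hx0.ne'
  have hsne : Real.sin (Real.pi * x) ≠ 0 := hsin_pos.ne'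
  have heq : 1 / x - Real.pi / Real.sin (Real.pi * x)
      = (Real.sin (Real.pi * x) - Real.pi * x) / (x * Real.sin (Real.pi * x)) := by
    rw [div_sub_div _ _ hxne hsne]
    ring
  rw [Real.norm_eq_abs, heq, abs_div]
  have hden_pos : 0 < x * Real.sin (Real.pi * x) := by positivity
  rw [abs_of_pos hden_pos]
  have hnum : |Real.sin (Real.pi * x) - Real.pi * x| ≤ (Real.pi * x) ^ 3 / 4 := by
    rw [abs_sub_comm, abs_of_pos (by linarith)]
    linarith
  have hden_ge : 3 / 4 * (Real.pi * x) * x ≤ x * Real.sin (Real.pi * x) := by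
    have h1 : 3 / 4 * (Real.pi * x) ≤ Real.sin (Real.pi * x) := by nlinarith
    calc 3 / 4 * (Real.pi * x) * x = x * (3 / 4 * (Real.pi * x)) := by ring
      _ ≤ x * Real.sin (Real.pi * x) := by nlinarith
  calc |Real.sin (Real.pi * x) - Real.pi * x| / (x * Real.sin (Real.pi * x))
      ≤ ((Real.pi * x) ^ 3 / 4) / (3 / 4 * (Real.pi * x) * x) := by
        apply div_le_div₀ (by positivity) hnum (by positivity) hden_ge
    _ = Real.pi ^ 2 * x / 3 := by field_simp

/-- The key cancellation in the stationary limit: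
`lim_{a→α⁻} [ 1/(α-a) - C(a,α) π u^{α-a}/sin(π(α-a)) ]
  = (N-1)(Γ'(1+α)/Γ(1+α) - 1/α) - 2γ_E - ατ - log u`,
with `C(a,α) = (α/a · Γ(1+a)/Γ(1+α))^{N-1} e^{(α²-a²)τ/2}/Γ(1+α-a)²`. -/
theorem stationary_limit_cancellation (α τ u : ℝ) (hα : 0 < α) (hτ : 0 < τ) (hu : 0 < u)
    (N : ℕ) (hN : 1 ≤ N) :
    Tendsto
      (fun a : ℝ =>
        1 / (α - a) -
          ((α / a * (Real.Gamma (1 + a) / Real.Gamma (1 + α))) ^ (N - 1) *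
              (Real.exp ((α ^ 2 - a ^ 2) * τ / 2) / Real.Gamma (1 + α - a) ^ 2)) *
            (Real.pi * u ^ (α - a) / Real.sin (Real.pi * (α - a))))
      (nhdsWithin α (Iio α))
      (nhds ((N - 1 : ℝ) * (deriv Real.Gamma (1 + α) / Real.Gamma (1 + α) - 1 / α) -
        2 * Real.eulerMascheroniConstant - α * τ - Real.log u)) := by
  have hαne : α ≠ 0 := hα.ne'
  have hGpos : 0 < Real.Gamma (1 + α) := Real.Gamma_pos_of_pos (by linarith)
  have hGne : Real.Gamma (1 + α) ≠ 0 := hGpos.ne'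
  have hdiffΓ : DifferentiableAt ℝ Real.Gamma (1 + α) := by
    refine Real.differentiableAt_Gamma fun m => ?_
    have hm : (0 : ℝ) ≤ m := m.cast_nonneg
    intro hc; linarith
  set ψ := deriv Real.Gamma (1 + α) with hψ
  set L : ℝ := ((N : ℝ) - 1) * (ψ / Real.Gamma (1 + α) - 1 / α) -
      2 * Real.eulerMascheroniConstant - α * τ - Real.log u with hL
  set g : ℝ → ℝ := fun a =>
    (α / a * (Real.Gamma (1 + a) / Real.Gamma (1 + α))) ^ (N - 1) *
      (Real.exp ((α ^ 2 - a ^ 2) * τ / 2) / Real.Gamma (1 + α - a) ^ 2) *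
      Real.exp (Real.log u * (α - a)) with hgdef
  have hΓ1 : Real.Gamma (1 + α - α) = 1 := by
    norm_num [Real.Gamma_one]
  have hgα : g α = 1 := by
    simp [hgdef, div_self hαne, div_self hGne, hΓ1]
  -- derivative of g at α
  have hA : HasDerivAt (fun a : ℝ => α / a * (Real.Gamma (1 + a) / Real.Gamma (1 + α)))
      (ψ / Real.Gamma (1 + α) - 1 / α) α := by
    have h1 : HasDerivAt (fun a : ℝ => α / a) ((0 * α - α * 1) / α ^ 2) α :=
      (hasDerivAt_const α α).div (hasDerivAt_id α) hαne
    have h2 : HasDerivAt (fun a : ℝ => Real.Gamma (1 + a)) (ψ * 1) α := by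
      have hin : HasDerivAt (fun a : ℝ => 1 + a) 1 α := (hasDerivAt_id α).const_add 1
      exact HasDerivAt.comp α (hdiffΓ.hasDerivAt) hin
    have h3 := (h1.mul (h2.div_const (Real.Gamma (1 + α))))
    refine h3.congr_deriv ?_
    field_simp
    ring
  have hP : HasDerivAt
      (fun a : ℝ => (α / a * (Real.Gamma (1 + a) / Real.Gamma (1 + α))) ^ (N - 1))
      (((N : ℝ) - 1) * (ψ / Real.Gamma (1 + α) - 1 / α)) α := by
    have h := hA.pow (N - 1)
    have hval : α / α * (Real.Gamma (1 + α) / Real.Gamma (1 + α)) = 1 := by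
      rw [div_self hαne, div_self hGne, mul_one]
    rw [hval, one_pow] at h
    refine h.congr_deriv ?_
    rw [Nat.cast_sub hN]
    push_cast
    ring
  have hE1 : HasDerivAt (fun a : ℝ => Real.exp ((α ^ 2 - a ^ 2) * τ / 2)) (-(α * τ)) α := by
    have hin : HasDerivAt (fun a : ℝ => (α ^ 2 - a ^ 2) * τ / 2)
        (-(2 * α ^ 1) * τ / 2) α := (((hasDerivAt_pow 2 α).const_sub (α ^ 2)).mul_const τ).div_const 2
    have h := (Real.hasDerivAt_exp ((α ^ 2 - α ^ 2) * τ / 2)).comp α hin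
    simp only [sub_self, zero_mul, zero_div, Real.exp_zero, one_mul] at h
    refine h.congr_deriv ?_
    ring
  have hq : HasDerivAt (fun a : ℝ => Real.Gamma (1 + α - a) ^ 2)
      (2 * Real.eulerMascheroniConstant) α := by
    have hin : HasDerivAt (fun a : ℝ => 1 + α - a) (-1) α := by
      simpa using (hasDerivAt_id α).const_sub (1 + α)
    have hΓ : HasDerivAt Real.Gamma (-Real.eulerMascheroniConstant) ((fun a : ℝ => 1 + α - a) α) := by
      have hv : (fun a : ℝ => 1 + α - a) α = 1 := by simp
      rw [hv]
      exact Real.hasDerivAt_Gamma_one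
    have hcomp := HasDerivAt.comp α hΓ hin
    have h := hcomp.pow 2
    refine h.congr_deriv ?_
    simp [hΓ1]
    try ring
  have hB : HasDerivAt
      (fun a : ℝ => Real.exp ((α ^ 2 - a ^ 2) * τ / 2) / Real.Gamma (1 + α - a) ^ 2)
      (-(α * τ) - 2 * Real.eulerMascheroniConstant) α := by
    have hqne : Real.Gamma (1 + α - α) ^ 2 ≠ 0 := by rw [hΓ1]; norm_num
    have h := hE1.div hq hqne
    refine h.congr_deriv ?_
    simp [hΓ1]
    try ring
  have hD : HasDerivAt (fun a : ℝ => Real.exp (Real.log u * (α - a))) (-Real.log u) α := by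
    have hin : HasDerivAt (fun a : ℝ => Real.log u * (α - a)) (Real.log u * (0 - 1)) α :=
      ((hasDerivAt_const α α).sub (hasDerivAt_id α)).const_mul (Real.log u)
    have h := (Real.hasDerivAt_exp (Real.log u * (α - α))).comp α hin
    simp only [sub_self, mul_zero, Real.exp_zero, one_mul] at h
    refine h.congr_deriv ?_
    ring
  have hg : HasDerivAt g L α := by
    have h := (hP.mul hB).mul hD
    have hval1 : α / α * (Real.Gamma (1 + α) / Real.Gamma (1 + α)) = 1 := by
      rw [div_self hαne, div_self hGne, mul_one]
    refine h.congr_deriv ?_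
    rw [hL]
    simp [hval1, hΓ1]
    ring
  have hslope : Tendsto (slope g α) (nhdsWithin α {α}ᶜ) (nhds L) :=
    hasDerivAt_iff_tendsto_slope.mp hg
  have hle : nhdsWithin α (Iio α) ≤ nhdsWithin α {α}ᶜ :=
    nhdsWithin_mono α (fun x hx => ne_of_lt hx)
  have hgc : Tendsto g (nhdsWithin α (Iio α)) (nhds 1) := by
    have h := hg.continuousAt.tendsto
    rw [hgα] at h
    exact h.mono_left nhdsWithin_le_nhds
  have hr : Tendsto (fun a : ℝ => 1 / (α - a) - Real.pi / Real.sin (Real.pi * (α - a)))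
      (nhdsWithin α (Iio α)) (nhds 0) := by
    refine aux_one_div_sub_pi_div_sin.comp ?_
    rw [tendsto_nhdsWithin_iff]
    constructor
    · have h : Tendsto (fun a : ℝ => α - a) (nhds α) (nhds (α - α)) :=
        (continuous_const.sub continuous_id).tendsto α
      rw [sub_self] at h
      exact h.mono_left nhdsWithin_le_nhds
    · filter_upwards [self_mem_nhdsWithin] with a (ha : a < α)
      exact sub_pos.mpr ha
  have hmain : Tendsto (fun a : ℝ => slope g α a +
      g a * (1 / (α - a) - Real.pi / Real.sin (Real.pi * (α - a))))
      (nhdsWithin α (Iio α)) (nhds L) := by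
    have h := (hslope.mono_left hle).add (hgc.mul hr)
    simpa using h
  refine hmain.congr' ?_
  filter_upwards [self_mem_nhdsWithin] with a (ha : a < α)
  have hrpow : u ^ (α - a) = Real.exp (Real.log u * (α - a)) :=
    Real.rpow_def_of_pos hu _
  rw [slope_def_field, hgα, hgdef]
  simp only
  rw [hrpow, show a - α = -(α - a) by ring, div_neg]
  ring
end

section
/- For q = e^{-ε} with ε > 0 and x < 0, define the q-exponential e_q(x) = 1/((1-q)x; q)_∞ = ∏_{k=0}^∞ (1 - (1-q) x q^k)^{-1}. Then lim_{ε → 0+} e_{e^{-ε}}(x) = e^{x}, uniformly for x in (-∞, 0]. -/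
open Real Filter Set

/-- The q-exponential `e_q(x) = 1/((1-q)x; q)_∞` with `q = e^{-ε}`. -/
noncomputable def qExp (ε : ℝ) (x : ℝ) : ℝ :=
  (∏' k : ℕ, (1 - (1 - Real.exp (-ε)) * x * Real.exp (-ε) ^ k))⁻¹

namespace QExpAux

lemma log_one_add_le {t : ℝ} (ht : 0 ≤ t) : Real.log (1 + t) ≤ t := by
  have := Real.log_le_sub_one_of_pos (x := 1 + t) (by linarith)
  linarith

lemma le_log_one_add {t : ℝ} (ht : 0 ≤ t) : t - t ^ 2 ≤ Real.log (1 + t) := by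
  rw [Real.le_log_iff_exp_le (by linarith)]
  have h2 : Real.exp (-(t - t ^ 2)) * Real.exp (t - t ^ 2) = 1 := by
    rw [← Real.exp_add]; simp
  have h1 : (1 - (t - t ^ 2)) * Real.exp (t - t ^ 2) ≤ 1 := by
    nlinarith [Real.add_one_le_exp (-(t - t ^ 2)), Real.exp_pos (t - t ^ 2)]
  nlinarith [Real.exp_pos (t - t ^ 2), sq_nonneg t, sq_nonneg (1 - t)]

variable {q c : ℝ}

lemma pos_aux (hq0 : 0 < q) (hc : 0 ≤ c) (k : ℕ) : 0 < 1 + c * q ^ k := by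
  nlinarith [mul_nonneg hc (pow_nonneg hq0.le k)]

lemma summable_geom (hq0 : 0 < q) (hq1 : q < 1) (_hc : 0 ≤ c) :
    Summable (fun k : ℕ => c * q ^ k) :=
  (summable_geometric_of_lt_one hq0.le hq1).mul_left c

lemma tsum_geom (hq0 : 0 < q) (hq1 : q < 1) (_hc : 0 ≤ c) :
    ∑' k : ℕ, c * q ^ k = c / (1 - q) := by
  rw [tsum_mul_left, tsum_geometric_of_lt_one hq0.le hq1, div_eq_mul_inv]

lemma summable_geom_sq (hq0 : 0 < q) (hq1 : q < 1) (_hc : 0 ≤ c) :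
    Summable (fun k : ℕ => (c * q ^ k) ^ 2) := by
  have h : (fun k : ℕ => (c * q ^ k) ^ 2) = fun k : ℕ => c ^ 2 * (q ^ 2) ^ k := by
    funext k; rw [mul_pow, ← pow_mul, ← pow_mul, Nat.mul_comm]
  rw [h]
  exact (summable_geometric_of_lt_one (by positivity) (by nlinarith)).mul_left _

lemma tsum_geom_sq (hq0 : 0 < q) (hq1 : q < 1) (_hc : 0 ≤ c) :
    ∑' k : ℕ, (c * q ^ k) ^ 2 = c ^ 2 / (1 - q ^ 2) := by
  have h : (fun k : ℕ => (c * q ^ k) ^ 2) = fun k : ℕ => c ^ 2 * (q ^ 2) ^ k := by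
    funext k; rw [mul_pow, ← pow_mul, ← pow_mul, Nat.mul_comm]
  rw [h, tsum_mul_left, tsum_geometric_of_lt_one (by positivity) (by nlinarith), div_eq_mul_inv]

lemma summable_log (hq0 : 0 < q) (hq1 : q < 1) (hc : 0 ≤ c) :
    Summable (fun k : ℕ => Real.log (1 + c * q ^ k)) := by
  refine Summable.of_nonneg_of_le (fun k => ?_) (fun k => ?_) (summable_geom hq0 hq1 hc)
  · exact Real.log_nonneg (by nlinarith [mul_nonneg hc (pow_nonneg hq0.le k)])
  · exact log_one_add_le (by positivity)

lemma tsum_log_le (hq0 : 0 < q) (hq1 : q < 1) (hc : 0 ≤ c) :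
    ∑' k : ℕ, Real.log (1 + c * q ^ k) ≤ c / (1 - q) := by
  rw [← tsum_geom hq0 hq1 hc]
  exact Summable.tsum_le_tsum (fun k => log_one_add_le (by positivity))
    (summable_log hq0 hq1 hc) (summable_geom hq0 hq1 hc)

lemma le_tsum_log (hq0 : 0 < q) (hq1 : q < 1) (hc : 0 ≤ c) :
    c / (1 - q) - c ^ 2 / (1 - q ^ 2) ≤ ∑' k : ℕ, Real.log (1 + c * q ^ k) := by
  have h := Summable.tsum_le_tsum (f := fun k : ℕ => c * q ^ k - (c * q ^ k) ^ 2)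
    (fun k => le_log_one_add (t := c * q ^ k) (by positivity))
    ((summable_geom hq0 hq1 hc).sub (summable_geom_sq hq0 hq1 hc))
    (summable_log hq0 hq1 hc)
  rwa [Summable.tsum_sub (summable_geom hq0 hq1 hc) (summable_geom_sq hq0 hq1 hc),
    tsum_geom hq0 hq1 hc, tsum_geom_sq hq0 hq1 hc] at h

lemma multipliable_aux (hq0 : 0 < q) (hq1 : q < 1) (hc : 0 ≤ c) :
    Multipliable (fun k : ℕ => 1 + c * q ^ k) :=
  Real.multipliable_of_summable_log
    (fun k => pos_aux hq0 hc k) (summable_log hq0 hq1 hc)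

lemma tprod_eq (hq0 : 0 < q) (hq1 : q < 1) (hc : 0 ≤ c) :
    ∏' k : ℕ, (1 + c * q ^ k) = Real.exp (∑' k : ℕ, Real.log (1 + c * q ^ k)) := by
  have h := Real.rexp_tsum_eq_tprod
    (fun k => pos_aux hq0 hc k) (summable_log hq0 hq1 hc)
  exact h.symm

lemma qExp_eq {ε x : ℝ} :
    qExp ε x = (∏' k : ℕ, (1 + -(1 - Real.exp (-ε)) * x * Real.exp (-ε) ^ k))⁻¹ := by
  rw [qExp]
  congr 1
  exact tprod_congr fun k => by ring

lemma qExp_bounds {ε x : ℝ} (hε : 0 < ε) (hx : x ≤ 0) :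
    Real.exp x ≤ qExp ε x ∧
      qExp ε x ≤ Real.exp (x + (1 - Real.exp (-ε)) * x ^ 2) := by
  rw [qExp_eq]
  set q := Real.exp (-ε) with hqdef
  have hq0 : 0 < q := Real.exp_pos _
  have hq1 : q < 1 := by
    rw [hqdef, Real.exp_lt_one_iff]; linarith
  set c := -(1 - q) * x with hcdef
  have hc0 : 0 ≤ c := by nlinarith
  have hqx : (∏' k : ℕ, (1 + c * q ^ k))⁻¹
      = Real.exp (-(∑' k : ℕ, Real.log (1 + c * q ^ k))) := by
    rw [tprod_eq hq0 hq1 hc0, ← Real.exp_neg]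
  have hcx : c / (1 - q) = -x := by
    rw [hcdef, div_eq_iff (by linarith : (1:ℝ) - q ≠ 0)]; ring
  have hT1 := tsum_log_le hq0 hq1 hc0
  have hT2 := le_tsum_log hq0 hq1 hc0
  have hsq : c ^ 2 / (1 - q ^ 2) ≤ (1 - q) * x ^ 2 := by
    rw [div_le_iff₀ (by nlinarith)]
    have : c ^ 2 = (1 - q) ^ 2 * x ^ 2 := by rw [hcdef]; ring
    nlinarith [sq_nonneg x, sq_nonneg (1 - q)]
  constructor
  · rw [hqx]; exact Real.exp_le_exp.mpr (by linarith)
  · rw [hqx]; exact Real.exp_le_exp.mpr (by linarith)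

lemma qExp_mono {ε x y : ℝ} (hε : 0 < ε) (hxy : x ≤ y) (hy : y ≤ 0) :
    qExp ε x ≤ qExp ε y := by
  rw [qExp_eq, qExp_eq]
  set q := Real.exp (-ε) with hqdef
  have hq0 : 0 < q := Real.exp_pos _
  have hq1 : q < 1 := by rw [hqdef, Real.exp_lt_one_iff]; linarith
  set cx := -(1 - q) * x with hcxdef
  set cy := -(1 - q) * y with hcydef
  have hcy0 : 0 ≤ cy := by rw [hcydef]; nlinarith
  have hcx0 : 0 ≤ cx := by rw [hcxdef]; nlinarith
  have hcyx : cy ≤ cx := by rw [hcxdef, hcydef]; nlinarith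
  have hpos : 0 < ∏' k : ℕ, (1 + cy * q ^ k) := by
    rw [tprod_eq hq0 hq1 hcy0]; exact Real.exp_pos _
  have hle : ∏' k : ℕ, (1 + cy * q ^ k) ≤ ∏' k : ℕ, (1 + cx * q ^ k) := by
    rw [tprod_eq hq0 hq1 hcy0, tprod_eq hq0 hq1 hcx0]
    apply Real.exp_le_exp.mpr
    refine Summable.tsum_le_tsum (fun k => ?_) (summable_log hq0 hq1 hcy0) (summable_log hq0 hq1 hcx0)
    have hqk : 0 ≤ q ^ k := pow_nonneg hq0.le k
    exact Real.log_le_log (pos_aux hq0 hcy0 k) (by nlinarith)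
  exact inv_anti₀ hpos hle

end QExpAux

open QExpAux in
/-- As `ε → 0+` (i.e. `q = e^{-ε} → 1⁻`), the q-exponential `e_q(x)` converges to `e^x`,
uniformly for `x ∈ (-∞, 0]`. -/
theorem qExp_tendstoUniformly :
    TendstoUniformlyOn (fun ε : ℝ => fun x : ℝ => qExp ε x) (fun x => Real.exp x)
      (nhdsWithin 0 (Ioi 0)) (Iic 0) := by
  rw [Metric.tendstoUniformlyOn_iff]
  intro η hη
  set R : ℝ := max 1 (Real.log (4 / η)) with hRdef
  have hR1 : 1 ≤ R := le_max_left _ _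
  have hR0 : 0 < R := by linarith
  have hexpR : Real.exp (-R) ≤ η / 4 := by
    have hlR : Real.log (4 / η) ≤ R := le_max_right _ _
    have h4 : (0 : ℝ) < 4 / η := by positivity
    calc Real.exp (-R) ≤ Real.exp (-Real.log (4 / η)) :=
          Real.exp_le_exp.mpr (by linarith)
      _ = (4 / η)⁻¹ := by rw [Real.exp_neg, Real.exp_log h4]
      _ = η / 4 := by rw [inv_div]
  set ε₀ : ℝ := min (Real.log 2) (Real.log (1 + η / 2)) / R ^ 2 with hε₀def
  have hε₀pos : 0 < ε₀ := by
    apply div_pos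
    · exact lt_min (Real.log_pos (by norm_num)) (Real.log_pos (by linarith))
    · positivity
  filter_upwards [Ioo_mem_nhdsGT hε₀pos] with ε hεmem x hx
  simp only [Set.mem_Iic] at hx
  obtain ⟨hε, hεlt⟩ := hεmem
  set δ : ℝ := 1 - Real.exp (-ε) with hδdef
  have hq1 : Real.exp (-ε) < 1 := by rw [Real.exp_lt_one_iff]; linarith
  have hδ0 : 0 ≤ δ := by rw [hδdef]; linarith
  have hδε : δ ≤ ε := by
    have := Real.add_one_le_exp (-ε)
    rw [hδdef]; linarith
  have hδR : δ * R ^ 2 ≤ min (Real.log 2) (Real.log (1 + η / 2)) := by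
    have h1 : δ ≤ ε₀ := le_trans hδε hεlt.le
    have h2 : δ * R ^ 2 ≤ ε₀ * R ^ 2 := by nlinarith
    have h3 : ε₀ * R ^ 2 = min (Real.log 2) (Real.log (1 + η / 2)) := by
      rw [hε₀def, div_mul_cancel₀]
      positivity
    exact le_trans h2 h3.le
  obtain ⟨hlow, hup⟩ := qExp_bounds hε hx
  rw [Real.dist_eq, abs_sub_comm, abs_of_nonneg (by linarith)]
  by_cases hxR : -R ≤ x
  · -- |x| ≤ R
    have hx2 : x ^ 2 ≤ R ^ 2 := by nlinarith
    have hδx : δ * x ^ 2 ≤ Real.log (1 + η / 2) := by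
      have := min_le_right (Real.log 2) (Real.log (1 + η / 2))
      nlinarith
    have hb : Real.exp (δ * x ^ 2) ≤ 1 + η / 2 := by
      calc Real.exp (δ * x ^ 2) ≤ Real.exp (Real.log (1 + η / 2)) :=
            Real.exp_le_exp.mpr hδx
        _ = 1 + η / 2 := Real.exp_log (by linarith)
    have hup' : qExp ε x ≤ Real.exp x * Real.exp (δ * x ^ 2) := by
      rw [← Real.exp_add]; exact hup
    have hex1 : Real.exp x ≤ 1 := Real.exp_le_one_iff.mpr hx
    nlinarith [Real.exp_pos x]
  · push_neg at hxR
    have hmono := qExp_mono hε hxR.le (by linarith : -R ≤ (0 : ℝ))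
    obtain ⟨hlowR, hupR⟩ := qExp_bounds hε (show -R ≤ (0 : ℝ) by linarith)
    have hupR' : qExp ε (-R) ≤ Real.exp (-R) * Real.exp (δ * R ^ 2) := by
      rw [← Real.exp_add]
      have : -R + δ * (-R) ^ 2 = -R + δ * R ^ 2 := by ring
      rw [← this]; exact hupR
    have h2 : Real.exp (δ * R ^ 2) ≤ 2 := by
      calc Real.exp (δ * R ^ 2) ≤ Real.exp (Real.log 2) :=
            Real.exp_le_exp.mpr (le_trans hδR (min_le_left _ _))
        _ = 2 := Real.exp_log (by norm_num)
    nlinarith [Real.exp_pos x, Real.exp_pos (-R)]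
end
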